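/- Fix a rigid metric space M (satisfying: equal pairwise distance matrices imply tuples are isometry-equivalent) and injective link functions. If G ~ graph_n(x*_{1:n}), then the expected normalized log-likelihood L̄(x_{1:n}) = E_G[ℓ_norm(x_{1:n}; G)] achieves its maximum over M^n exactly on the isometry class [x*_{1:n}]. -/

import Mathlib

open scoped BigOperators

variable {M : Type*} [MetricSpace M]

/-- A metric space is *rigid* when any two tuples with identical pairwise
distance matrices are related by a global isometry. -/
def Rigid (M : Type*) [MetricSpace M] : Prop :=
  ∀ (n : ℕ) (x y : Fin n → M),
    (∀ p q, dist (x p) (x q) = dist (y p) (y q)) →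
      ∃ φ : M ≃ᵢ M, ∀ i, φ (y i) = x i

/-- The logit function, `logit x = log (x / (1 - x))`. -/
noncomputable def logit (x : ℝ) : ℝ := Real.log (x / (1 - x))

/-- The expected normalized log-likelihood (negative cross-entropy)
`L̄(x_{1:n}) = E_G[ℓ_norm(x_{1:n}; G)]` when `G ~ graph_n(x*_{1:n})`, i.e. when
the edges `G_{pq}` are independent Bernoulli with success probability
`w (dist (x*_p, x*_q))`:
`L̄(x) = ∑_{p<q} 2^{−p−q} (log (1 − w(dist(x_p,x_q)))
          + w(dist(x*_p,x*_q)) · logit (w(dist(x_p,x_q))))`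
(with the `1`-indexed weight `2^{−p−q}` rendered as `(2⁻¹)^(p+q+2)` for
`0`-indexed `p, q`). -/
noncomputable def expectedLoglike (w : ℝ → ℝ) {n : ℕ}
    (xstar x : Fin n → M) : ℝ :=
  ∑ p : Fin n, ∑ q : Fin n,
    if p < q then
      ((2 : ℝ)⁻¹) ^ ((p : ℕ) + (q : ℕ) + 2) *
        (Real.log (1 - w (dist (x p) (x q)))
          + w (dist (xstar p) (xstar q)) * logit (w (dist (x p) (x q))))
    else 0

lemma gibbs_lt {a u : ℝ} (ha : 0 < a) (ha1 : a < 1) (hu : 0 < u) (hu1 : u < 1)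
    (hne : u ≠ a) :
    Real.log (1 - u) + a * logit u < Real.log (1 - a) + a * logit a := by
  have h1u : (0:ℝ) < 1 - u := by linarith
  have h1a : (0:ℝ) < 1 - a := by linarith
  have hr1 : Real.log (u / a) < u / a - 1 :=
    Real.log_lt_sub_one_of_pos (div_pos hu ha)
      (fun h => hne ((div_eq_one_iff_eq ha.ne').mp h))
  have hr2 : Real.log ((1 - u) / (1 - a)) < (1 - u) / (1 - a) - 1 :=
    Real.log_lt_sub_one_of_pos (div_pos h1u h1a)
      (fun h => hne (by
        have := (div_eq_one_iff_eq h1a.ne').mp h; linarith))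
  rw [Real.log_div hu.ne' ha.ne'] at hr1
  rw [Real.log_div h1u.ne' h1a.ne'] at hr2
  have e1 : a * (u / a - 1) = u - a := by field_simp
  have e2 : (1 - a) * ((1 - u) / (1 - a) - 1) = a - u := by field_simp; ring
  have m1 := mul_lt_mul_of_pos_left hr1 ha
  have m2 := mul_lt_mul_of_pos_left hr2 h1a
  rw [e1] at m1
  rw [e2] at m2
  simp only [logit, Real.log_div hu.ne' h1u.ne', Real.log_div ha.ne' h1a.ne']
  nlinarith [m1, m2]

lemma gibbs_le {a u : ℝ} (ha : 0 < a) (ha1 : a < 1) (hu : 0 < u) (hu1 : u < 1) :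
    Real.log (1 - u) + a * logit u ≤ Real.log (1 - a) + a * logit a := by
  rcases eq_or_ne u a with rfl | hne
  · exact le_refl _
  · exact (gibbs_lt ha ha1 hu hu1 hne).le

lemma term_le (w : ℝ → ℝ)
    (hw : ∀ t ∈ Set.Ici (0 : ℝ), w t ∈ Set.Ioo (0 : ℝ) 1)
    {n : ℕ} (xstar y : Fin n → M) (p q : Fin n) :
    (if p < q then
      ((2 : ℝ)⁻¹) ^ ((p : ℕ) + (q : ℕ) + 2) *
        (Real.log (1 - w (dist (y p) (y q)))
          + w (dist (xstar p) (xstar q)) * logit (w (dist (y p) (y q))))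
    else 0)
    ≤ (if p < q then
      ((2 : ℝ)⁻¹) ^ ((p : ℕ) + (q : ℕ) + 2) *
        (Real.log (1 - w (dist (xstar p) (xstar q)))
          + w (dist (xstar p) (xstar q)) * logit (w (dist (xstar p) (xstar q))))
    else 0) := by
  by_cases hpq : p < q
  · simp only [hpq, if_true]
    have ha := hw _ (dist_nonneg (x := xstar p) (y := xstar q))
    have hu := hw _ (dist_nonneg (x := y p) (y := y q))
    exact mul_le_mul_of_nonneg_left (gibbs_le ha.1 ha.2 hu.1 hu.2) (by positivity)
  · simp [hpq]

lemma expectedLoglike_le_self (w : ℝ → ℝ)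
    (hw : ∀ t ∈ Set.Ici (0 : ℝ), w t ∈ Set.Ioo (0 : ℝ) 1)
    {n : ℕ} (xstar y : Fin n → M) :
    expectedLoglike w xstar y ≤ expectedLoglike w xstar xstar := by
  unfold expectedLoglike
  exact Finset.sum_le_sum fun p _ =>
    Finset.sum_le_sum fun q _ => term_le w hw xstar y p q

lemma expectedLoglike_lt_self (w : ℝ → ℝ)
    (hw : ∀ t ∈ Set.Ici (0 : ℝ), w t ∈ Set.Ioo (0 : ℝ) 1)
    (hwinj : Set.InjOn w (Set.Ici 0))
    {n : ℕ} (xstar y : Fin n → M) {p q : Fin n} (hpq : p < q)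
    (hd : dist (y p) (y q) ≠ dist (xstar p) (xstar q)) :
    expectedLoglike w xstar y < expectedLoglike w xstar xstar := by
  unfold expectedLoglike
  rw [← Finset.sum_product', ← Finset.sum_product']
  refine Finset.sum_lt_sum (fun i _ => term_le w hw xstar y i.1 i.2) ⟨(p, q), by simp, ?_⟩
  simp only [hpq, if_true]
  have ha := hw _ (dist_nonneg (x := xstar p) (y := xstar q))
  have hu := hw _ (dist_nonneg (x := y p) (y := y q))
  have hne : w (dist (y p) (y q)) ≠ w (dist (xstar p) (xstar q)) := by
    intro h
    exact hd (hwinj dist_nonneg dist_nonneg h)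
  exact mul_lt_mul_of_pos_left (gibbs_lt ha.1 ha.2 hu.1 hu.2 hne) (by positivity)

/-- **The expected normalized log-likelihood is maximized exactly on the true
isometry class.**  If `M` is rigid, the link function `w` is injective with
values in `(0,1)`, and `G ~ graph_n(x*_{1:n})`, then the set of maximizers over
`M^n` of `L̄` is exactly the isometry class `[x*_{1:n}]`. -/
theorem expectedLoglike_max_iff_isometry_class (M : Type*) [MetricSpace M]
    (hM : Rigid M) (w : ℝ → ℝ)
    (hw : ∀ t ∈ Set.Ici (0 : ℝ), w t ∈ Set.Ioo (0 : ℝ) 1)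
    (hwinj : Set.InjOn w (Set.Ici 0))
    (n : ℕ) (xstar : Fin n → M) :
    {x : Fin n → M | ∀ y : Fin n → M,
        expectedLoglike w xstar y ≤ expectedLoglike w xstar x}
      = {x : Fin n → M | ∃ φ : M ≃ᵢ M, ∀ i, φ (xstar i) = x i} := by
  ext x
  simp only [Set.mem_setOf_eq]
  constructor
  · intro hx
    have heq : expectedLoglike w xstar x = expectedLoglike w xstar xstar :=
      le_antisymm (expectedLoglike_le_self w hw xstar x) (hx xstar)
    have hdist : ∀ p q, dist (x p) (x q) = dist (xstar p) (xstar q) := by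
      intro p q
      by_contra hd
      rcases lt_trichotomy p q with h | h | h
      · exact absurd heq (ne_of_lt (expectedLoglike_lt_self w hw hwinj xstar x h hd))
      · subst h; simp at hd
      · have hd' : dist (x q) (x p) ≠ dist (xstar q) (xstar p) := by
          rw [dist_comm, dist_comm (xstar q)]; exact hd
        exact absurd heq (ne_of_lt (expectedLoglike_lt_self w hw hwinj xstar x h hd'))
    exact hM n x xstar hdist
  · rintro ⟨φ, hφ⟩ y
    have hdist : ∀ p q, dist (x p) (x q) = dist (xstar p) (xstar q) := by
      intro p q
      rw [← hφ p, ← hφ q, φ.dist_eq]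
    have : expectedLoglike w xstar x = expectedLoglike w xstar xstar := by
      unfold expectedLoglike
      simp only [hdist]
    rw [this]
    exact expectedLoglike_le_self w hw xstar y
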